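/- With the notation of the matroid MI_n: each set Hᵢ (i = 1, 2, 3) is a hyperplane of MI_n, i.e., rank(Hᵢ) = n+2 and rank(Hᵢ ∪ {e}) = n+3 for every e ∈ E_n \ Hᵢ. Consequently each complement Hᵢᶜ = E_n \ Hᵢ is a cocircuit of MI_n. -/

import Mathlib

open Finset

/-- The ground set `E_n = {1,2,3,4} ∪ X ∪ Y ∪ Z`: the four special points are `Sum.inl 0, …,
Sum.inl 3` (standing for `1,2,3,4`), and `Sum.inr (k, j)` is the `j`-th element of `X`, `Y`, `Z`
for `k = 0, 1, 2` respectively. -/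
abbrev MIElt (n : ℕ) := Fin 4 ⊕ (Fin 3 × Fin (n + 1))

/-- `MIXYZ n 0 = X`, `MIXYZ n 1 = Y`, `MIXYZ n 2 = Z`. -/
def MIXYZ (n : ℕ) (k : Fin 3) : Finset (MIElt n) :=
  (Finset.univ : Finset (Fin (n + 1))).image fun j => Sum.inr (k, j)

/-- `H₁ = {1} ∪ Y ∪ Z`, `H₂ = {2} ∪ X ∪ Z`, `H₃ = {3} ∪ X ∪ Y` (indices shifted to `0,1,2`). -/
def MIH (n : ℕ) (i : Fin 3) : Finset (MIElt n) :=
  insert (Sum.inl i.castSucc) (MIXYZ n (i + 1) ∪ MIXYZ n (i + 2))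

/-- `C₁ = {1,4} ∪ X`, `C₂ = {2,4} ∪ Y`, `C₃ = {3,4} ∪ Z` (indices shifted to `0,1,2`). -/
def MIC (n : ℕ) (i : Fin 3) : Finset (MIElt n) :=
  insert (Sum.inl i.castSucc) (insert (Sum.inl 3) (MIXYZ n i))

/-- The set `{1,2,3}` of special points. -/
def MIT (n : ℕ) : Finset (MIElt n) := {Sum.inl 0, Sum.inl 1, Sum.inl 2}

/-- The collection `B_n` of bases of the matroid `MI_n`. -/
def MIBases (n : ℕ) (B : Finset (MIElt n)) : Prop :=
  B.card = n + 3 ∧ ¬ MIT n ⊆ B ∧ ∀ i : Fin 3, ¬ B ⊆ MIC n i ∧ ¬ B ⊆ MIH n i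

lemma inl_not_mem_MIXYZ (n : ℕ) (k : Fin 3) (a : Fin 4) : Sum.inl a ∉ MIXYZ n k := by
  simp [MIXYZ]

lemma inr_mem_MIXYZ (n : ℕ) (k k' : Fin 3) (j : Fin (n+1)) :
    Sum.inr (k, j) ∈ MIXYZ n k' ↔ k = k' := by
  constructor
  · intro h
    simp [MIXYZ] at h
    exact h.symm
  · rintro rfl
    simp [MIXYZ]

lemma card_MIXYZ (n : ℕ) (k : Fin 3) : (MIXYZ n k).card = n + 1 := by
  rw [MIXYZ, Finset.card_image_of_injective _ (by intro a b h; simpa using h)]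
  simp

lemma inl_mem_MIH (n : ℕ) (a : Fin 4) (j : Fin 3) :
    Sum.inl a ∈ MIH n j ↔ a = j.castSucc := by
  simp [MIH, inl_not_mem_MIXYZ]

lemma inr_mem_MIH (n : ℕ) (k : Fin 3) (x : Fin (n+1)) (j : Fin 3) :
    Sum.inr (k, x) ∈ MIH n j ↔ k = j + 1 ∨ k = j + 2 := by
  simp [MIH, inr_mem_MIXYZ]

lemma inl_mem_MIC (n : ℕ) (a : Fin 4) (j : Fin 3) :
    Sum.inl a ∈ MIC n j ↔ a = j.castSucc ∨ a = 3 := by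
  simp [MIC, inl_not_mem_MIXYZ]

lemma inr_mem_MIC (n : ℕ) (k : Fin 3) (x : Fin (n+1)) (j : Fin 3) :
    Sum.inr (k, x) ∈ MIC n j ↔ k = j := by
  simp [MIC, inr_mem_MIXYZ]

lemma fin3_add_one_ne (i : Fin 3) : i + 1 ≠ i := by fin_cases i <;> decide

lemma castSucc_ne_three (i : Fin 3) : i.castSucc ≠ (3 : Fin 4) := by fin_cases i <;> decide

/-- key: the constructed set is a basis -/
lemma MI_basis_aux (n : ℕ) (i : Fin 3) (e : MIElt n) (he : e ∉ MIH n i) :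
    MIBases n (insert e (insert (Sum.inl i.castSucc) (MIXYZ n (i+1)))) := by
  set S := insert (Sum.inl i.castSucc : MIElt n) (MIXYZ n (i+1)) with hS
  have hSsub : S ⊆ MIH n i := by
    intro x hx
    rw [hS, mem_insert] at hx
    rcases hx with rfl | hx
    · simp [MIH]
    · exact mem_insert_of_mem (mem_union_left _ hx)
  have heS : e ∉ S := fun h => he (hSsub h)
  have hinl : Sum.inl (i.castSucc) ∉ MIXYZ n (i+1) := inl_not_mem_MIXYZ n _ _
  have hmem : ∀ x, x ∈ insert e S ↔ x = e ∨ x = Sum.inl i.castSucc ∨ x ∈ MIXYZ n (i+1) := by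
    intro x; simp [hS]
  refine ⟨?_, ?_, ?_⟩
  · rw [card_insert_of_notMem heS, hS, card_insert_of_notMem hinl, card_MIXYZ]
  · intro hT
    have h0 := hT (show Sum.inl 0 ∈ MIT n by simp [MIT])
    have h1 := hT (show Sum.inl 1 ∈ MIT n by simp [MIT])
    have h2 := hT (show Sum.inl 2 ∈ MIT n by simp [MIT])
    rw [hmem] at h0 h1 h2
    simp only [inl_not_mem_MIXYZ, or_false] at h0 h1 h2
    rcases e with a | p
    · fin_cases i <;> fin_cases a <;> simp_all [inl_mem_MIH]
    · fin_cases i <;> simp_all [Fin.ext_iff]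
  · intro j
    constructor
    · intro h
      by_cases hj : j = i
      · subst hj
        have := h (show (Sum.inr (j+1, 0) : MIElt n) ∈ insert e S by
          rw [hmem]; right; right; exact (inr_mem_MIXYZ n _ _ _).mpr rfl)
        rw [inr_mem_MIC] at this
        exact fin3_add_one_ne j this
      · have := h (show (Sum.inl i.castSucc : MIElt n) ∈ insert e S by
          rw [hmem]; right; left; rfl)
        rw [inl_mem_MIC] at this
        rcases this with h' | h'
        · exact hj (Fin.castSucc_injective _ h').symm
        · exact castSucc_ne_three i h'
    · intro h
      by_cases hj : j = i
      · subst hj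
        exact he (h (by rw [hmem]; left; rfl))
      · have := h (show (Sum.inl i.castSucc : MIElt n) ∈ insert e S by
          rw [hmem]; right; left; rfl)
        rw [inl_mem_MIH] at this
        exact hj (Fin.castSucc_injective _ this).symm

/-- Each `Hᵢ` is a hyperplane of `MI_n`: its rank (the largest size of an independent subset)
is `n + 2`, while adjoining any element outside `Hᵢ` produces a set of full rank `n + 3`. -/
theorem MI_H_is_hyperplane (n : ℕ) (i : Fin 3) :
    ((∃ I : Finset (MIElt n), I ⊆ MIH n i ∧ (∃ B, MIBases n B ∧ I ⊆ B) ∧ I.card = n + 2) ∧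
      (∀ I : Finset (MIElt n), I ⊆ MIH n i → (∃ B, MIBases n B ∧ I ⊆ B) → I.card ≤ n + 2)) ∧
    (∀ e : MIElt n, e ∉ MIH n i →
      ∃ I : Finset (MIElt n), I ⊆ insert e (MIH n i) ∧ (∃ B, MIBases n B ∧ I ⊆ B) ∧
        I.card = n + 3) := by
  have hSsub : insert (Sum.inl i.castSucc : MIElt n) (MIXYZ n (i+1)) ⊆ MIH n i := by
    intro x hx
    rw [mem_insert] at hx
    rcases hx with rfl | hx
    · simp [MIH]
    · exact mem_insert_of_mem (mem_union_left _ hx)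
  have hSe : ∀ e : MIElt n, e ∉ MIH n i →
      e ∉ insert (Sum.inl i.castSucc : MIElt n) (MIXYZ n (i+1)) :=
    fun e he h => he (hSsub h)
  have hScard : (insert (Sum.inl i.castSucc : MIElt n) (MIXYZ n (i+1))).card = n + 2 := by
    rw [card_insert_of_notMem (inl_not_mem_MIXYZ n _ _), card_MIXYZ]
  have h4 : (Sum.inl 3 : MIElt n) ∉ MIH n i := by
    rw [inl_mem_MIH]; exact fun h => castSucc_ne_three i h.symm
  refine ⟨⟨?_, ?_⟩, ?_⟩
  · refine ⟨insert (Sum.inl i.castSucc) (MIXYZ n (i+1)), hSsub,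
      ⟨_, MI_basis_aux n i (Sum.inl 3) h4, subset_insert _ _⟩, hScard⟩
  · rintro I hIH ⟨B, hB, hIB⟩
    by_contra h
    push_neg at h
    have hIcard : n + 3 ≤ I.card := h
    have hIBeq : I = B := Finset.eq_of_subset_of_card_le hIB (hB.1 ▸ hIcard)
    exact (hB.2.2 i).2 (hIBeq ▸ hIH)
  · intro e he
    refine ⟨insert e (insert (Sum.inl i.castSucc) (MIXYZ n (i+1))), ?_,
      ⟨_, MI_basis_aux n i e he, Finset.Subset.refl _⟩, ?_⟩
    · exact insert_subset_insert _ hSsub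
    · rw [card_insert_of_notMem (hSe e he), hScard]
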